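/- Geometric multiplicity of the eigenvalue −Ψ₂⁰ (part of the Segre characteristic [2 2 2 (1 1) 1 1] claim of Proposition 3.3): assume Ψ₂⁰ ≠ 0, Ψ₂⁰ + Ψ₂ ≠ 0, Ψ₂⁰ + conj(Ψ₂) ≠ 0, and 2·Ψ₂·conj(Ψ₂) − Ψ₂⁰·(Ψ₂ + conj(Ψ₂)) ≠ 0. Then the eigenspace { v ∈ ℂ¹⁰ : Mᵀ v = −Ψ₂⁰ · v } has complex dimension exactly 2. -/

import Mathlib

open ComplexConjugate

/-- The Weyl curvature operator of a five-dimensional spacetime that is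
algebraically special relative to an optical structure, written in the
adapted basis of 2-forms (equation (A.1) of the paper). -/
noncomputable def weylOp (P2 P3 P31 P32 P4 P40 : ℂ) (P20 P30 : ℝ) :
    Matrix (Fin 10) (Fin 10) ℂ :=
  Matrix.of
    ![![P2, 0, 0, 0, 0, 0, 0, 0, 0, 0],
      ![0, conj P2, 0, 0, 0, 0, 0, 0, 0, 0],
      ![0, 0, (P20 : ℂ), 0, 0, 0, 0, 0, 0, 0],
      ![conj P32, 0, conj P31, -(P20 : ℂ), 0, 0, 0, 0, 0, 0],
      ![0, P32, P31, 0, -(P20 : ℂ), 0, 0, 0, 0, 0],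
      ![-P3, -conj P3, conj P32 + P32, 0, 0, -(P20 : ℂ) - P2 - conj P2,
        -P2 + conj P2, 0, 0, 0],
      ![-P3 + P31, conj P3 - conj P31, -P32 + conj P32, 0, 0, -P2 + conj P2,
        -P2 - conj P2 + (P20 : ℂ), 0, 0, 0],
      ![P4, (P30 : ℂ), P40, 0, conj P32, P3, P3 - P31, P2, 0, 0],
      ![(P30 : ℂ), conj P4, conj P40, P32, 0, conj P3, -conj P3 + conj P31, 0,
        conj P2, 0],
      ![P40, conj P40, -2 * (P30 : ℂ), P31, conj P31, -conj P32 - P32,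
        P32 - conj P32, 0, 0, (P20 : ℂ)]]

open Matrix

/-- Geometric multiplicity of the eigenvalue `−Ψ₂⁰` (part of the Segre
characteristic `[2 2 2 (1 1) 1 1]` claim of Proposition 3.3): when `−Ψ₂⁰` is
distinct from the other eigenvalues, the eigenspace
`{v : Mᵀ v = −Ψ₂⁰ v}` has complex dimension exactly `2`. -/
private lemma finIdx_4_3 : (3 : Fin 4) = Fin.succ (2 : Fin 3) := rfl
private lemma finIdx_5_3 : (3 : Fin 5) = Fin.succ (2 : Fin 4) := rfl
private lemma finIdx_5_4 : (4 : Fin 5) = Fin.succ (3 : Fin 4) := rfl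
private lemma finIdx_6_3 : (3 : Fin 6) = Fin.succ (2 : Fin 5) := rfl
private lemma finIdx_6_4 : (4 : Fin 6) = Fin.succ (3 : Fin 5) := rfl
private lemma finIdx_6_5 : (5 : Fin 6) = Fin.succ (4 : Fin 5) := rfl
private lemma finIdx_7_3 : (3 : Fin 7) = Fin.succ (2 : Fin 6) := rfl
private lemma finIdx_7_4 : (4 : Fin 7) = Fin.succ (3 : Fin 6) := rfl
private lemma finIdx_7_5 : (5 : Fin 7) = Fin.succ (4 : Fin 6) := rfl
private lemma finIdx_7_6 : (6 : Fin 7) = Fin.succ (5 : Fin 6) := rfl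
private lemma finIdx_8_3 : (3 : Fin 8) = Fin.succ (2 : Fin 7) := rfl
private lemma finIdx_8_4 : (4 : Fin 8) = Fin.succ (3 : Fin 7) := rfl
private lemma finIdx_8_5 : (5 : Fin 8) = Fin.succ (4 : Fin 7) := rfl
private lemma finIdx_8_6 : (6 : Fin 8) = Fin.succ (5 : Fin 7) := rfl
private lemma finIdx_8_7 : (7 : Fin 8) = Fin.succ (6 : Fin 7) := rfl
private lemma finIdx_9_3 : (3 : Fin 9) = Fin.succ (2 : Fin 8) := rfl
private lemma finIdx_9_4 : (4 : Fin 9) = Fin.succ (3 : Fin 8) := rfl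
private lemma finIdx_9_5 : (5 : Fin 9) = Fin.succ (4 : Fin 8) := rfl
private lemma finIdx_9_6 : (6 : Fin 9) = Fin.succ (5 : Fin 8) := rfl
private lemma finIdx_9_7 : (7 : Fin 9) = Fin.succ (6 : Fin 8) := rfl
private lemma finIdx_9_8 : (8 : Fin 9) = Fin.succ (7 : Fin 8) := rfl
private lemma finIdx_10_3 : (3 : Fin 10) = Fin.succ (2 : Fin 9) := rfl
private lemma finIdx_10_4 : (4 : Fin 10) = Fin.succ (3 : Fin 9) := rfl
private lemma finIdx_10_5 : (5 : Fin 10) = Fin.succ (4 : Fin 9) := rfl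
private lemma finIdx_10_6 : (6 : Fin 10) = Fin.succ (5 : Fin 9) := rfl
private lemma finIdx_10_7 : (7 : Fin 10) = Fin.succ (6 : Fin 9) := rfl
private lemma finIdx_10_8 : (8 : Fin 10) = Fin.succ (7 : Fin 9) := rfl
private lemma finIdx_10_9 : (9 : Fin 10) = Fin.succ (8 : Fin 9) := rfl

theorem weylOp_eigenspace_dim (P2 P3 P31 P32 P4 P40 : ℂ) (P20 P30 : ℝ)
    (h0 : (P20 : ℂ) ≠ 0) (h1 : (P20 : ℂ) + P2 ≠ 0) (h2 : (P20 : ℂ) + conj P2 ≠ 0)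
    (h3 : 2 * P2 * conj P2 - (P20 : ℂ) * (P2 + conj P2) ≠ 0) :
    Module.finrank ℂ
      ↥(Module.End.eigenspace
          (Matrix.toLin' (weylOp P2 P3 P31 P32 P4 P40 P20 P30)ᵀ) (-(P20 : ℂ))) = 2 := by
  set E := Module.End.eigenspace
      (Matrix.toLin' (weylOp P2 P3 P31 P32 P4 P40 P20 P30)ᵀ) (-(P20 : ℂ)) with hE
  have hmem : ∀ v : Fin 10 → ℂ, v ∈ E ↔
      (weylOp P2 P3 P31 P32 P4 P40 P20 P30)ᵀ *ᵥ v = (-(P20 : ℂ)) • v := by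
    intro v
    rw [hE, Module.End.mem_eigenspace_iff, Matrix.toLin'_apply]
  set φ : E →ₗ[ℂ] (Fin 2 → ℂ) :=
    (LinearMap.funLeft ℂ ℂ ![(3 : Fin 10), 4]).comp E.subtype with hφ
  have hbij : Function.Bijective φ := by
    constructor
    · rw [← LinearMap.ker_eq_bot, eq_bot_iff]
      rintro ⟨v, hv⟩ hker
      rw [LinearMap.mem_ker] at hker
      have hv3 := congrFun hker 0
      have hv4 := congrFun hker 1
      rw [hmem] at hv
      have e0 := congrFun hv 0
      have e1 := congrFun hv 1
      have e2 := congrFun hv 2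
      have e5 := congrFun hv 5
      have e6 := congrFun hv 6
      have e7 := congrFun hv 7
      have e8 := congrFun hv 8
      have e9 := congrFun hv 9
      simp only [hφ, LinearMap.comp_apply, LinearMap.funLeft_apply, Submodule.subtype_apply,
        Pi.zero_apply] at hv3 hv4
      simp [weylOp, Matrix.mulVec, dotProduct, Fin.sum_univ_succ,
        finIdx_4_3, finIdx_5_3, finIdx_5_4, finIdx_6_3, finIdx_6_4, finIdx_6_5, finIdx_7_3, finIdx_7_4, finIdx_7_5, finIdx_7_6, finIdx_8_3, finIdx_8_4, finIdx_8_5, finIdx_8_6, finIdx_8_7, finIdx_9_3, finIdx_9_4, finIdx_9_5, finIdx_9_6, finIdx_9_7, finIdx_9_8, finIdx_10_3, finIdx_10_4, finIdx_10_5, finIdx_10_6, finIdx_10_7, finIdx_10_8, finIdx_10_9] at hv3 hv4 e0 e1 e2 e5 e6 e7 e8 e9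
      have hv7 : v 7 = 0 := by
        have h := mul_eq_zero.mp (show ((P20 : ℂ) + P2) * v 7 = 0 by
          linear_combination e7)
        exact h.resolve_left h1
      have hv8 : v 8 = 0 := by
        have h := mul_eq_zero.mp (show ((P20 : ℂ) + conj P2) * v 8 = 0 by
          linear_combination e8)
        exact h.resolve_left h2
      have hv9 : v 9 = 0 := by
        have h := mul_eq_zero.mp (show (2 * (P20 : ℂ)) * v 9 = 0 by
          linear_combination e9)
        exact h.resolve_left (mul_ne_zero two_ne_zero h0)
      have hv6 : v 6 = 0 := by
        have h := mul_eq_zero.mp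
          (show (2 * (2 * P2 * conj P2 - (P20 : ℂ) * (P2 + conj P2))) * v 6 = 0 by
            linear_combination (-(conj P2 - P2)) * e5 + (-(P2 + conj P2)) * e6
              + ((conj P2 - P2) * P3 + (P2 + conj P2) * (P3 - P31)) * hv7
              + ((conj P2 - P2) * conj P3 + (P2 + conj P2) * (conj P31 - conj P3)) * hv8
              + (-(conj P2 - P2) * (conj P32 + P32) + (P2 + conj P2) * (P32 - conj P32)) * hv9)
        exact h.resolve_left (mul_ne_zero two_ne_zero h3)
      have hv5 : v 5 = 0 := by
        have k1 : (P2 + conj P2) * v 5 = 0 := by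
          linear_combination (-1 : ℂ) * e5 + (conj P2 - P2) * hv6 + P3 * hv7 + conj P3 * hv8
            + (-(conj P32 + P32)) * hv9
        have k2 : (conj P2 - P2) * v 5 = 0 := by
          linear_combination e6 + ((P2 + conj P2) - 2 * (P20 : ℂ)) * hv6 + (P31 - P3) * hv7
            + (conj P3 - conj P31) * hv8 + (conj P32 - P32) * hv9
        have h := mul_eq_zero.mp
          (show (2 * P2 * conj P2 - (P20 : ℂ) * (P2 + conj P2)) * v 5 = 0 by
            linear_combination ((P2 + conj P2) / 2 - (P20 : ℂ)) * k1 - ((conj P2 - P2) / 2) * k2)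
        exact h.resolve_left h3
      have hv0 : v 0 = 0 := by
        have h := mul_eq_zero.mp (show ((P20 : ℂ) + P2) * v 0 = 0 by
          linear_combination e0 - conj P32 * hv3 + P3 * hv5 + (P3 - P31) * hv6 - P4 * hv7
            - (P30 : ℂ) * hv8 - P40 * hv9)
        exact h.resolve_left h1
      have hv1 : v 1 = 0 := by
        have h := mul_eq_zero.mp (show ((P20 : ℂ) + conj P2) * v 1 = 0 by
          linear_combination e1 - P32 * hv4 + conj P3 * hv5 + (conj P31 - conj P3) * hv6
            - (P30 : ℂ) * hv7 - conj P4 * hv8 - conj P40 * hv9)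
        exact h.resolve_left h2
      have hv2 : v 2 = 0 := by
        have h := mul_eq_zero.mp (show (2 * (P20 : ℂ)) * v 2 = 0 by
          linear_combination e2 - conj P31 * hv3 - P31 * hv4 - (conj P32 + P32) * hv5
            + (P32 - conj P32) * hv6 - P40 * hv7 - conj P40 * hv8 + 2 * (P30 : ℂ) * hv9)
        exact h.resolve_left (mul_ne_zero two_ne_zero h0)
      have hv' : v = 0 := by
        funext i
        fin_cases i
        · exact hv0
        · exact hv1
        · exact hv2
        · exact hv3
        · exact hv4
        · exact hv5
        · exact hv6
        · exact hv7
        · exact hv8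
        · exact hv9
      simp [hv']
    · intro c
      set w : Fin 10 → ℂ := ![-(conj P32 * c 0) / ((P20 : ℂ) + P2),
        -(P32 * c 1) / ((P20 : ℂ) + conj P2),
        -(conj P31 * c 0 + P31 * c 1) / (2 * (P20 : ℂ)),
        c 0, c 1, 0, 0, 0, 0, 0] with hw
      have hwE : w ∈ E := by
        rw [hmem]
        funext i
        revert i
        rw [Fin.forall_fin_succ]; refine ⟨?_, ?_⟩
        · simp [hw, weylOp, Matrix.mulVec, dotProduct, Fin.sum_univ_succ, finIdx_4_3, finIdx_5_3, finIdx_5_4, finIdx_6_3, finIdx_6_4, finIdx_6_5, finIdx_7_3, finIdx_7_4, finIdx_7_5, finIdx_7_6, finIdx_8_3, finIdx_8_4, finIdx_8_5, finIdx_8_6, finIdx_8_7, finIdx_9_3, finIdx_9_4, finIdx_9_5, finIdx_9_6, finIdx_9_7, finIdx_9_8, finIdx_10_3, finIdx_10_4, finIdx_10_5, finIdx_10_6, finIdx_10_7, finIdx_10_8, finIdx_10_9]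
          field_simp
          ring
        rw [Fin.forall_fin_succ]; refine ⟨?_, ?_⟩
        · simp [hw, weylOp, Matrix.mulVec, dotProduct, Fin.sum_univ_succ, finIdx_4_3, finIdx_5_3, finIdx_5_4, finIdx_6_3, finIdx_6_4, finIdx_6_5, finIdx_7_3, finIdx_7_4, finIdx_7_5, finIdx_7_6, finIdx_8_3, finIdx_8_4, finIdx_8_5, finIdx_8_6, finIdx_8_7, finIdx_9_3, finIdx_9_4, finIdx_9_5, finIdx_9_6, finIdx_9_7, finIdx_9_8, finIdx_10_3, finIdx_10_4, finIdx_10_5, finIdx_10_6, finIdx_10_7, finIdx_10_8, finIdx_10_9]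
          field_simp
          ring
        rw [Fin.forall_fin_succ]; refine ⟨?_, ?_⟩
        · simp [hw, weylOp, Matrix.mulVec, dotProduct, Fin.sum_univ_succ, finIdx_4_3, finIdx_5_3, finIdx_5_4, finIdx_6_3, finIdx_6_4, finIdx_6_5, finIdx_7_3, finIdx_7_4, finIdx_7_5, finIdx_7_6, finIdx_8_3, finIdx_8_4, finIdx_8_5, finIdx_8_6, finIdx_8_7, finIdx_9_3, finIdx_9_4, finIdx_9_5, finIdx_9_6, finIdx_9_7, finIdx_9_8, finIdx_10_3, finIdx_10_4, finIdx_10_5, finIdx_10_6, finIdx_10_7, finIdx_10_8, finIdx_10_9]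
          field_simp
          ring
        rw [Fin.forall_fin_succ]; refine ⟨?_, ?_⟩
        · simp [hw, weylOp, Matrix.mulVec, dotProduct, Fin.sum_univ_succ, finIdx_4_3, finIdx_5_3, finIdx_5_4, finIdx_6_3, finIdx_6_4, finIdx_6_5, finIdx_7_3, finIdx_7_4, finIdx_7_5, finIdx_7_6, finIdx_8_3, finIdx_8_4, finIdx_8_5, finIdx_8_6, finIdx_8_7, finIdx_9_3, finIdx_9_4, finIdx_9_5, finIdx_9_6, finIdx_9_7, finIdx_9_8, finIdx_10_3, finIdx_10_4, finIdx_10_5, finIdx_10_6, finIdx_10_7, finIdx_10_8, finIdx_10_9]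
        rw [Fin.forall_fin_succ]; refine ⟨?_, ?_⟩
        · simp [hw, weylOp, Matrix.mulVec, dotProduct, Fin.sum_univ_succ, finIdx_4_3, finIdx_5_3, finIdx_5_4, finIdx_6_3, finIdx_6_4, finIdx_6_5, finIdx_7_3, finIdx_7_4, finIdx_7_5, finIdx_7_6, finIdx_8_3, finIdx_8_4, finIdx_8_5, finIdx_8_6, finIdx_8_7, finIdx_9_3, finIdx_9_4, finIdx_9_5, finIdx_9_6, finIdx_9_7, finIdx_9_8, finIdx_10_3, finIdx_10_4, finIdx_10_5, finIdx_10_6, finIdx_10_7, finIdx_10_8, finIdx_10_9]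
        rw [Fin.forall_fin_succ]; refine ⟨?_, ?_⟩
        · simp [hw, weylOp, Matrix.mulVec, dotProduct, Fin.sum_univ_succ, finIdx_4_3, finIdx_5_3, finIdx_5_4, finIdx_6_3, finIdx_6_4, finIdx_6_5, finIdx_7_3, finIdx_7_4, finIdx_7_5, finIdx_7_6, finIdx_8_3, finIdx_8_4, finIdx_8_5, finIdx_8_6, finIdx_8_7, finIdx_9_3, finIdx_9_4, finIdx_9_5, finIdx_9_6, finIdx_9_7, finIdx_9_8, finIdx_10_3, finIdx_10_4, finIdx_10_5, finIdx_10_6, finIdx_10_7, finIdx_10_8, finIdx_10_9]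
        rw [Fin.forall_fin_succ]; refine ⟨?_, ?_⟩
        · simp [hw, weylOp, Matrix.mulVec, dotProduct, Fin.sum_univ_succ, finIdx_4_3, finIdx_5_3, finIdx_5_4, finIdx_6_3, finIdx_6_4, finIdx_6_5, finIdx_7_3, finIdx_7_4, finIdx_7_5, finIdx_7_6, finIdx_8_3, finIdx_8_4, finIdx_8_5, finIdx_8_6, finIdx_8_7, finIdx_9_3, finIdx_9_4, finIdx_9_5, finIdx_9_6, finIdx_9_7, finIdx_9_8, finIdx_10_3, finIdx_10_4, finIdx_10_5, finIdx_10_6, finIdx_10_7, finIdx_10_8, finIdx_10_9]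
        rw [Fin.forall_fin_succ]; refine ⟨?_, ?_⟩
        · simp [hw, weylOp, Matrix.mulVec, dotProduct, Fin.sum_univ_succ, finIdx_4_3, finIdx_5_3, finIdx_5_4, finIdx_6_3, finIdx_6_4, finIdx_6_5, finIdx_7_3, finIdx_7_4, finIdx_7_5, finIdx_7_6, finIdx_8_3, finIdx_8_4, finIdx_8_5, finIdx_8_6, finIdx_8_7, finIdx_9_3, finIdx_9_4, finIdx_9_5, finIdx_9_6, finIdx_9_7, finIdx_9_8, finIdx_10_3, finIdx_10_4, finIdx_10_5, finIdx_10_6, finIdx_10_7, finIdx_10_8, finIdx_10_9]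
        rw [Fin.forall_fin_succ]; refine ⟨?_, ?_⟩
        · simp [hw, weylOp, Matrix.mulVec, dotProduct, Fin.sum_univ_succ, finIdx_4_3, finIdx_5_3, finIdx_5_4, finIdx_6_3, finIdx_6_4, finIdx_6_5, finIdx_7_3, finIdx_7_4, finIdx_7_5, finIdx_7_6, finIdx_8_3, finIdx_8_4, finIdx_8_5, finIdx_8_6, finIdx_8_7, finIdx_9_3, finIdx_9_4, finIdx_9_5, finIdx_9_6, finIdx_9_7, finIdx_9_8, finIdx_10_3, finIdx_10_4, finIdx_10_5, finIdx_10_6, finIdx_10_7, finIdx_10_8, finIdx_10_9]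
        rw [Fin.forall_fin_succ]; refine ⟨?_, fun i => i.elim0⟩
        · simp [hw, weylOp, Matrix.mulVec, dotProduct, Fin.sum_univ_succ, finIdx_4_3, finIdx_5_3, finIdx_5_4, finIdx_6_3, finIdx_6_4, finIdx_6_5, finIdx_7_3, finIdx_7_4, finIdx_7_5, finIdx_7_6, finIdx_8_3, finIdx_8_4, finIdx_8_5, finIdx_8_6, finIdx_8_7, finIdx_9_3, finIdx_9_4, finIdx_9_5, finIdx_9_6, finIdx_9_7, finIdx_9_8, finIdx_10_3, finIdx_10_4, finIdx_10_5, finIdx_10_6, finIdx_10_7, finIdx_10_8, finIdx_10_9]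
      refine ⟨⟨w, hwE⟩, ?_⟩
      funext i
      fin_cases i
      · simp [hφ, hw, finIdx_4_3, finIdx_5_3, finIdx_5_4, finIdx_6_3, finIdx_6_4, finIdx_6_5, finIdx_7_3, finIdx_7_4, finIdx_7_5, finIdx_7_6, finIdx_8_3, finIdx_8_4, finIdx_8_5, finIdx_8_6, finIdx_8_7, finIdx_9_3, finIdx_9_4, finIdx_9_5, finIdx_9_6, finIdx_9_7, finIdx_9_8, finIdx_10_3, finIdx_10_4, finIdx_10_5, finIdx_10_6, finIdx_10_7, finIdx_10_8, finIdx_10_9]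
      · simp [hφ, hw, finIdx_4_3, finIdx_5_3, finIdx_5_4, finIdx_6_3, finIdx_6_4, finIdx_6_5, finIdx_7_3, finIdx_7_4, finIdx_7_5, finIdx_7_6, finIdx_8_3, finIdx_8_4, finIdx_8_5, finIdx_8_6, finIdx_8_7, finIdx_9_3, finIdx_9_4, finIdx_9_5, finIdx_9_6, finIdx_9_7, finIdx_9_8, finIdx_10_3, finIdx_10_4, finIdx_10_5, finIdx_10_6, finIdx_10_7, finIdx_10_8, finIdx_10_9]
  exact ((LinearEquiv.ofBijective φ hbij).finrank_eq).trans (by simp)
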